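/- Let T be a finite tree with h vertices and Wiener index W_T, and let T' be the subdivision tree of T, obtained by replacing every edge of T by a path through one new internal vertex. Then the Wiener index of T' is W(T') = 8·W_T − 2h(h − 1). -/

import Mathlib

set_option autoImplicit false

open Finset

set_option linter.unusedSectionVars false
/-- The two endpoints of an unordered pair, as a `Finset`. -/
def sym2Finset (e : Sym2 ℕ) : Finset ℕ :=
  Sym2.lift ⟨fun a b => {a, b}, fun a b => by ext x; simp [or_comm]⟩ e

/-- The vertex set of the graph on `ℕ` whose edge set is the finite set `E`. -/
def verts (E : Finset (Sym2 ℕ)) : Finset ℕ := E.biUnion sym2Finset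

/-- The Wiener index of the graph with edge set `E`: the sum of shortest-path
distances over all unordered pairs of vertices (here computed as half the sum
over ordered pairs). -/
noncomputable def wienerE (E : Finset (Sym2 ℕ)) : ℝ :=
  (∑ u ∈ verts E, ∑ v ∈ verts E,
    ((SimpleGraph.fromEdgeSet (↑E : Set (Sym2 ℕ))).dist u v : ℝ)) / 2

/-- `E` is the edge set of a (nonempty, loopless, acyclic, connected) tree. -/
def IsTreeEdges (E : Finset (Sym2 ℕ)) : Prop :=
  E.Nonempty ∧ (∀ e ∈ E, ¬ e.IsDiag) ∧
  (SimpleGraph.fromEdgeSet (↑E : Set (Sym2 ℕ))).IsAcyclic ∧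
  ∀ u ∈ verts E, ∀ v ∈ verts E,
    (SimpleGraph.fromEdgeSet (↑E : Set (Sym2 ℕ))).Reachable u v

/-- A base label strictly larger than every vertex label used in `E`. -/
def freshE (E : Finset (Sym2 ℕ)) : ℕ := (verts E).sup id + 1

/-- The `L` edges of a pendant path `root — f 0 — f 1 — ⋯ — f (L-1)`
consisting of `L` new vertices attached to `root`. -/
def pathEdges (root : ℕ) (f : ℕ → ℕ) (L : ℕ) : Finset (Sym2 ℕ) :=
  (Finset.range L).image (fun j => if j = 0 then s(root, f 0) else s(f (j-1), f j))

/-- The `m`-th order subdivision: every edge `uw` of `E` (taken with `u < w`) is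
replaced by a path from `u` to `w` through `m` new internal vertices, which get
fresh labels. -/
def subdivide (m : ℕ) (E : Finset (Sym2 ℕ)) : Finset (Sym2 ℕ) :=
  ((verts E) ×ˢ (verts E)).biUnion (fun uw =>
    if uw.1 < uw.2 ∧ s(uw.1, uw.2) ∈ E then
      pathEdges uw.1 (fun j => freshE E + Nat.pair (Nat.pair uw.1 uw.2) j) m
      ∪ {s(freshE E + Nat.pair (Nat.pair uw.1 uw.2) (m - 1), uw.2)}
    else ∅)

section GenericGraph
variable {V : Type*} [DecidableEq V] {G : SimpleGraph V}

open SimpleGraph Walk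

lemma exists_geodesic {u v : V} (hr : G.Reachable u v) :
    ∃ p : G.Walk u v, p.IsPath ∧ p.length = G.dist u v := by
  obtain ⟨p, hp⟩ := hr.exists_walk_length_eq_dist
  refine ⟨p.toPath, p.toPath.2, le_antisymm ?_ (G.dist_le _)⟩
  calc (p.toPath : G.Walk u v).length ≤ p.length := p.length_bypass_le
  _ = G.dist u v := hp

lemma dist_support_le {u v z : V} (p : G.Walk u v) (hz : z ∈ p.support) :
    G.dist u z + G.dist z v ≤ p.length := by
  have hsplit := p.take_spec hz
  have := congrArg Walk.length hsplit
  rw [Walk.length_append] at this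
  calc G.dist u z + G.dist z v ≤ (p.takeUntil z hz).length + (p.dropUntil z hz).length :=
        Nat.add_le_add (G.dist_le _) (G.dist_le _)
  _ = p.length := this

lemma dist_adj_le {u a b : V} (hr : G.Reachable u a) (hab : G.Adj a b) :
    G.dist u b ≤ G.dist u a + 1 := by
  obtain ⟨p, _, hl⟩ := exists_geodesic hr
  have := G.dist_le (p.concat hab)
  rwa [Walk.length_concat, hl] at this

lemma dist_adj_eq_one {a b : V} (hab : G.Adj a b) : G.dist a b = 1 := by
  refine le_antisymm (by simpa using G.dist_le (Walk.cons hab Walk.nil)) ?_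
  have : G.dist a b ≠ 0 := by
    simp only [ne_eq, hab.reachable.dist_eq_zero_iff]
    exact hab.ne
  omega

lemma dist_ne_adj (hac : G.IsAcyclic) {u a b : V} (hr : G.Reachable u a) (hab : G.Adj a b) :
    G.dist u a ≠ G.dist u b := by
  intro heq
  obtain ⟨pa, hpa, hla⟩ := exists_geodesic hr
  obtain ⟨pb, hpb, hlb⟩ := exists_geodesic (hr.trans hab.reachable)
  have hbnot : b ∉ pa.support := by
    intro hb
    have h5 := dist_support_le pa hb
    have hba : G.dist b a ≠ 0 := by
      simp only [ne_eq, (hab.symm.reachable).dist_eq_zero_iff]; exact hab.ne'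
    rw [hla, heq] at h5
    omega
  have hq : (pa.concat hab).IsPath := by
    rw [← Walk.isPath_reverse_iff, Walk.reverse_concat, Walk.cons_isPath_iff]
    refine ⟨hpa.reverse, ?_⟩
    rw [Walk.support_reverse, List.mem_reverse]
    exact hbnot
  have := hac.path_unique ⟨pa.concat hab, hq⟩ ⟨pb, hpb⟩
  have hlen := congrArg (fun q : G.Path u b => (q : G.Walk u b).length) this
  simp only [Walk.length_concat] at hlen
  rw [hla, hlb, heq] at hlen
  omega

lemma dist_adj_cases (hac : G.IsAcyclic) {u a b : V} (hr : G.Reachable u a) (hab : G.Adj a b) :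
    G.dist u b = G.dist u a + 1 ∨ G.dist u a = G.dist u b + 1 := by
  have h1 := dist_adj_le hr hab
  have h2 := dist_adj_le (hr.trans hab.reachable) hab.symm
  have h3 := dist_ne_adj hac hr hab
  omega

lemma exists_parent {u w : V} (hr : G.Reachable u w) (hne : w ≠ u) :
    ∃ x, G.Adj x w ∧ G.dist u x + 1 = G.dist u w := by
  obtain ⟨p, _, hl⟩ := exists_geodesic hr
  obtain ⟨x, h, q, hq⟩ := Walk.exists_eq_cons_of_ne hne p.reverse
  refine ⟨x, h.symm, ?_⟩
  have hlen : q.length + 1 = G.dist u w := by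
    have := congrArg Walk.length hq
    rw [Walk.length_reverse, Walk.length_cons, hl] at this
    omega
  have h1 : G.dist u x ≤ q.length := by
    have := G.dist_le q.reverse
    rwa [Walk.length_reverse] at this
  have h2 : G.dist u w ≤ G.dist u x + 1 := dist_adj_le ⟨q.reverse⟩ h.symm
  omega

lemma unique_parent (hac : G.IsAcyclic) {u w x y : V}
    (hx : G.Adj x w) (hy : G.Adj y w)
    (hdx : G.dist u x + 1 = G.dist u w) (hdy : G.dist u y + 1 = G.dist u w)
    (hrx : G.Reachable u x) (hry : G.Reachable u y) : x = y := by
  obtain ⟨px, hpx, hlx⟩ := exists_geodesic hrx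
  obtain ⟨py, hpy, hly⟩ := exists_geodesic hry
  have hwx : w ∉ px.support := by
    intro hw
    have := dist_support_le px hw
    rw [hlx] at this
    omega
  have hwy : w ∉ py.support := by
    intro hw
    have := dist_support_le py hw
    rw [hly] at this
    omega
  have hqx : (Walk.cons hx.symm px.reverse).IsPath := by
    rw [Walk.cons_isPath_iff]
    exact ⟨hpx.reverse, by rw [Walk.support_reverse, List.mem_reverse]; exact hwx⟩
  have hqy : (Walk.cons hy.symm py.reverse).IsPath := by
    rw [Walk.cons_isPath_iff]
    exact ⟨hpy.reverse, by rw [Walk.support_reverse, List.mem_reverse]; exact hwy⟩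
  have := hac.path_unique ⟨Walk.cons hx.symm px.reverse, hqx⟩ ⟨Walk.cons hy.symm py.reverse, hqy⟩
  have hsup := congrArg (fun q : G.Path w u => (q : G.Walk w u).support) this
  simp only [Walk.support_cons] at hsup
  have h1 := px.reverse.support_eq_cons
  have h2 := py.reverse.support_eq_cons
  rw [h1, h2] at hsup
  exact (List.cons.injEq _ _ _ _).mp ((List.cons.injEq _ _ _ _).mp hsup).2 |>.1



lemma dist_triangle' {u v w : V} (hr1 : G.Reachable u v) (hr2 : G.Reachable v w) :
    G.dist u w ≤ G.dist u v + G.dist v w := by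
  obtain ⟨p, _, hp⟩ := exists_geodesic hr1
  obtain ⟨q, _, hq⟩ := exists_geodesic hr2
  have := G.dist_le (p.append q)
  rwa [Walk.length_append, hp, hq] at this

lemma tie_aux (hac : G.IsAcyclic) {a b x w : V} (hab : G.Adj a b) (hxw : G.Adj x w)
    (hne : s(x, w) ≠ s(a, b))
    (h1 : G.dist a x = G.dist a w + 1) (h2 : G.dist b w = G.dist b x + 1) : False := by
  have hdab : G.dist a b = 1 := dist_adj_eq_one hab
  have hdba : G.dist b a = 1 := dist_adj_eq_one hab.symm
  have hdxw : G.dist x w = 1 := dist_adj_eq_one hxw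
  have hdwx : G.dist w x = 1 := dist_adj_eq_one hxw.symm
  have hrax : G.Reachable a x := by
    refine SimpleGraph.Reachable.of_dist_ne_zero ?_
    omega
  have hraw : G.Reachable a w := hrax.trans hxw.reachable
  have hrbx : G.Reachable b x := hab.symm.reachable.trans hrax
  -- equal distances
  have htri1 : G.dist a x ≤ G.dist a b + G.dist b x := dist_triangle' hab.reachable hrbx
  have htri2 : G.dist b w ≤ G.dist b a + G.dist a w := dist_triangle' hab.symm.reachable hraw
  have heqd : G.dist a w = G.dist b x := by omega
  set α := G.dist b x with hα
  obtain ⟨pa, hpa, hla⟩ := exists_geodesic hraw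
  obtain ⟨pb, hpb, hlb⟩ := exists_geodesic hrbx
  have hxpa : x ∉ pa.support := by
    intro hmem
    have := dist_support_le pa hmem
    rw [hla] at this
    omega
  have hw_ne_a : w ≠ a := by
    intro hwa
    have hw0 : G.dist a w = 0 := by rw [hwa]; exact SimpleGraph.dist_self
    have hx0 : G.dist b x = 0 := by omega
    have hxb : b = x := (hrbx.dist_eq_zero_iff).mp hx0
    apply hne
    rw [hwa, ← hxb]
    exact Sym2.eq_swap
  have hwpb : w ∉ pb.support := by
    intro hmem
    have := dist_support_le pb hmem
    rw [hlb] at this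
    omega
  have hapb : a ∉ pb.support := by
    intro hmem
    have := dist_support_le pb hmem
    rw [hlb, ← hα] at this
    have : G.dist b a + G.dist a x ≤ α := this
    omega
  -- two x→a paths
  have hP1 : (Walk.cons hxw pa.reverse).IsPath := by
    rw [Walk.cons_isPath_iff]
    exact ⟨hpa.reverse, by rw [Walk.support_reverse, List.mem_reverse]; exact hxpa⟩
  have hP2 : ((pb.reverse).concat hab.symm).IsPath := by
    rw [← Walk.isPath_reverse_iff, Walk.reverse_concat, Walk.reverse_reverse,
      Walk.cons_isPath_iff]
    exact ⟨hpb, by simpa using hapb⟩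
  have hPQ := hac.path_unique ⟨Walk.cons hxw pa.reverse, hP1⟩ ⟨(pb.reverse).concat hab.symm, hP2⟩
  have hsup := congrArg (fun q : G.Path x a => (q : G.Walk x a).support) hPQ
  simp only [Walk.support_cons, Walk.support_concat] at hsup
  have hwin : w ∈ x :: pa.reverse.support := by
    rw [pa.reverse.support_eq_cons]
    simp
  have hwin2 : w ∈ ((pb.reverse).support.concat a) := by
    rw [List.concat_eq_append]; exact hsup ▸ hwin
  rw [List.concat_eq_append, List.mem_append] at hwin2
  rcases hwin2 with hwin2 | hwin2
  · rw [Walk.support_reverse, List.mem_reverse] at hwin2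
    exact hwpb hwin2
  · simp at hwin2
    exact hw_ne_a hwin2

lemma tie (hac : G.IsAcyclic) {a b x w : V} (hab : G.Adj a b) (hxw : G.Adj x w)
    (hne : s(x, w) ≠ s(a, b)) (hrax : G.Reachable a x) :
    G.dist a x + G.dist b x ≠ G.dist a w + G.dist b w := by
  intro heq
  have hrbx : G.Reachable b x := hab.symm.reachable.trans hrax
  have hc1 := dist_adj_cases hac hrax hxw
  have hc2 := dist_adj_cases hac hrbx hxw
  rcases hc1 with h1 | h1 <;> rcases hc2 with h2 | h2
  · omega
  · exact tie_aux hac hab hxw.symm (by rw [Sym2.eq_swap]; exact hne) h1 h2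
  · exact tie_aux hac hab hxw hne h1 h2
  · omega

end GenericGraph


section Struct
open SimpleGraph

variable (E₀ : Finset (Sym2 ℕ))

/-- midpoint label for the oriented edge (a,b) -/
def mv (a b : ℕ) : ℕ := freshE E₀ + Nat.pair (Nat.pair a b) 0

/-- oriented edges -/
def oE : Finset (ℕ × ℕ) :=
  ((verts E₀) ×ˢ (verts E₀)).filter (fun p => p.1 < p.2 ∧ s(p.1, p.2) ∈ E₀)

variable {E₀}

lemma endpoint_mem {a b : ℕ} (h : s(a, b) ∈ E₀) : a ∈ verts E₀ ∧ b ∈ verts E₀ := by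
  constructor <;>
  · rw [verts, Finset.mem_biUnion]
    exact ⟨s(a, b), h, by simp [sym2Finset]⟩

lemma vert_lt_fresh {v : ℕ} (hv : v ∈ verts E₀) : v < freshE E₀ := by
  have : v ≤ (verts E₀).sup id := Finset.le_sup (f := id) hv
  rw [freshE]
  omega

lemma fresh_le_mv (a b : ℕ) : freshE E₀ ≤ mv E₀ a b := Nat.le_add_right _ _

lemma mv_inj {a b a' b' : ℕ} (h : mv E₀ a b = mv E₀ a' b') : a = a' ∧ b = b' := by
  rw [mv, mv, Nat.add_left_cancel_iff, Nat.pair_eq_pair] at h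
  exact Nat.pair_eq_pair.mp h.1

lemma mem_subdivide {e : Sym2 ℕ} :
    e ∈ subdivide 1 E₀ ↔ ∃ a b : ℕ, a < b ∧ s(a, b) ∈ E₀ ∧
      (e = s(a, mv E₀ a b) ∨ e = s(mv E₀ a b, b)) := by
  rw [subdivide, Finset.mem_biUnion]
  constructor
  · rintro ⟨uw, huw, he⟩
    by_cases hcond : uw.1 < uw.2 ∧ s(uw.1, uw.2) ∈ E₀
    · rw [if_pos hcond, Finset.mem_union] at he
      refine ⟨uw.1, uw.2, hcond.1, hcond.2, ?_⟩
      rcases he with he | he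
      · left
        rw [pathEdges, Finset.mem_image] at he
        obtain ⟨j, hj, hje⟩ := he
        simp only [Finset.mem_range, Nat.lt_one_iff] at hj
        subst hj
        simp only [if_pos rfl] at hje
        rw [← hje]
        rfl
      · right
        rw [Finset.mem_singleton] at he
        rw [he]
        rfl
    · rw [if_neg hcond] at he
      exact absurd he (Finset.notMem_empty e)
  · rintro ⟨a, b, hab, hmem, he⟩
    refine ⟨(a, b), ?_, ?_⟩
    · rw [Finset.mem_product]
      exact ⟨(endpoint_mem hmem).1, (endpoint_mem hmem).2⟩
    · rw [if_pos ⟨hab, hmem⟩, Finset.mem_union]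
      rcases he with he | he
      · left
        rw [pathEdges, Finset.mem_image]
        exact ⟨0, by simp, by rw [if_pos rfl, he]; rfl⟩
      · right
        rw [Finset.mem_singleton, he]
        rfl

end Struct


section Struct2
open SimpleGraph

variable (E₀ : Finset (Sym2 ℕ))

def G0 : SimpleGraph ℕ := SimpleGraph.fromEdgeSet (↑E₀ : Set (Sym2 ℕ))

def G1 : SimpleGraph ℕ := SimpleGraph.fromEdgeSet (↑(subdivide 1 E₀) : Set (Sym2 ℕ))

variable {E₀}

lemma mem_oE {p : ℕ × ℕ} : p ∈ oE E₀ ↔ p.1 < p.2 ∧ s(p.1, p.2) ∈ E₀ := by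
  rw [oE, Finset.mem_filter, Finset.mem_product]
  constructor
  · exact fun h => h.2
  · exact fun h => ⟨⟨(endpoint_mem h.2).1, (endpoint_mem h.2).2⟩, h⟩

lemma adj0_iff {a b : ℕ} : (G0 E₀).Adj a b ↔ s(a, b) ∈ E₀ ∧ a ≠ b := by
  rw [G0, SimpleGraph.fromEdgeSet_adj, Finset.mem_coe]

lemma adj0_of_mem (hd : ∀ e ∈ E₀, ¬ e.IsDiag) {a b : ℕ} (h : s(a, b) ∈ E₀) :
    (G0 E₀).Adj a b := by
  rw [adj0_iff]
  refine ⟨h, fun hab => hd _ h ?_⟩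
  rw [hab]
  exact Sym2.mk_isDiag_iff.mpr rfl

lemma mv_ne_vert {v a b : ℕ} (hv : v ∈ verts E₀) : v ≠ mv E₀ a b := by
  have h1 := vert_lt_fresh hv
  have h2 := fresh_le_mv (E₀ := E₀) a b
  omega

lemma adj1_iff {x y : ℕ} : (G1 E₀).Adj x y ↔ x ≠ y ∧ ∃ a b : ℕ, a < b ∧ s(a, b) ∈ E₀ ∧
    (s(x, y) = s(a, mv E₀ a b) ∨ s(x, y) = s(mv E₀ a b, b)) := by
  rw [G1, SimpleGraph.fromEdgeSet_adj, Finset.mem_coe, mem_subdivide]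
  exact ⟨fun h => ⟨h.2, h.1⟩, fun h => ⟨h.2, h.1⟩⟩

lemma adj1_left {a b : ℕ} (hab : a < b) (h : s(a, b) ∈ E₀) :
    (G1 E₀).Adj a (mv E₀ a b) := by
  rw [adj1_iff]
  exact ⟨mv_ne_vert (endpoint_mem h).1, a, b, hab, h, Or.inl rfl⟩

lemma adj1_right {a b : ℕ} (hab : a < b) (h : s(a, b) ∈ E₀) :
    (G1 E₀).Adj (mv E₀ a b) b := by
  rw [adj1_iff]
  exact ⟨(mv_ne_vert (endpoint_mem h).2).symm, a, b, hab, h, Or.inr rfl⟩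

lemma adj1_dest {x y : ℕ} (h : (G1 E₀).Adj x y) : ∃ a b : ℕ, a < b ∧ s(a, b) ∈ E₀ ∧
    ((x = a ∧ y = mv E₀ a b) ∨ (x = mv E₀ a b ∧ y = a) ∨
     (x = mv E₀ a b ∧ y = b) ∨ (x = b ∧ y = mv E₀ a b)) := by
  rw [adj1_iff] at h
  obtain ⟨-, a, b, hab, hmem, hor⟩ := h
  refine ⟨a, b, hab, hmem, ?_⟩
  rcases hor with hor | hor <;> rw [Sym2.eq_iff] at hor <;> tauto

lemma N1 {v z : ℕ} (hv : v ∈ verts E₀) (h : (G1 E₀).Adj v z) :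
    ∃ a b : ℕ, a < b ∧ s(a, b) ∈ E₀ ∧ z = mv E₀ a b ∧ (v = a ∨ v = b) := by
  obtain ⟨a, b, hab, hmem, hor⟩ := adj1_dest h
  rcases hor with ⟨h1, h2⟩ | ⟨h1, h2⟩ | ⟨h1, h2⟩ | ⟨h1, h2⟩
  · exact ⟨a, b, hab, hmem, h2, Or.inl h1⟩
  · exact absurd h1 (mv_ne_vert hv)
  · exact absurd h1 (mv_ne_vert hv)
  · exact ⟨a, b, hab, hmem, h2, Or.inr h1⟩

lemma N2 {a b z : ℕ} (hab : a < b) (hmem : s(a, b) ∈ E₀)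
    (h : (G1 E₀).Adj (mv E₀ a b) z) : z = a ∨ z = b := by
  obtain ⟨a', b', hab', hmem', hor⟩ := adj1_dest h
  rcases hor with ⟨h1, h2⟩ | ⟨h1, h2⟩ | ⟨h1, h2⟩ | ⟨h1, h2⟩
  · exact absurd h1.symm (mv_ne_vert (endpoint_mem hmem').1)
  · obtain ⟨rfl, rfl⟩ := mv_inj h1
    exact Or.inl h2
  · obtain ⟨rfl, rfl⟩ := mv_inj h1
    exact Or.inr h2
  · exact absurd h1.symm (mv_ne_vert (endpoint_mem hmem').2)

lemma verts_subdivide (hd : ∀ e ∈ E₀, ¬ e.IsDiag) :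
    verts (subdivide 1 E₀) = verts E₀ ∪ (oE E₀).image (fun p => mv E₀ p.1 p.2) := by
  ext x
  rw [verts, Finset.mem_biUnion, Finset.mem_union, Finset.mem_image]
  constructor
  · rintro ⟨e, he, hx⟩
    obtain ⟨a, b, hab, hmem, hor⟩ := mem_subdivide.mp he
    rcases hor with rfl | rfl <;> simp only [sym2Finset, Sym2.lift_mk, Finset.mem_insert,
      Finset.mem_singleton] at hx
    · rcases hx with rfl | rfl
      · exact Or.inl (endpoint_mem hmem).1
      · exact Or.inr ⟨(a, b), mem_oE.mpr ⟨hab, hmem⟩, rfl⟩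
    · rcases hx with rfl | rfl
      · exact Or.inr ⟨(a, b), mem_oE.mpr ⟨hab, hmem⟩, rfl⟩
      · exact Or.inl (endpoint_mem hmem).2
  · rintro (hx | ⟨p, hp, rfl⟩)
    · rw [verts, Finset.mem_biUnion] at hx
      obtain ⟨e, he, hx⟩ := hx
      induction e with
      | _ u1 u2 =>
        simp only [sym2Finset, Sym2.lift_mk, Finset.mem_insert, Finset.mem_singleton] at hx
        have key : ∀ a b : ℕ, a < b → s(a, b) ∈ E₀ → (x = a ∨ x = b) →
            ∃ e ∈ subdivide 1 E₀, x ∈ sym2Finset e := by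
          rintro a b hab hmem (rfl | rfl)
          · exact ⟨s(x, mv E₀ x b), mem_subdivide.mpr ⟨x, b, hab, hmem, Or.inl rfl⟩,
              by simp [sym2Finset]⟩
          · exact ⟨s(mv E₀ a x, x), mem_subdivide.mpr ⟨a, x, hab, hmem, Or.inr rfl⟩,
              by simp [sym2Finset]⟩
        have hne : u1 ≠ u2 := fun hEq => hd _ he
          (by rw [hEq] at he ⊢; exact Sym2.mk_isDiag_iff.mpr rfl)
        rcases Nat.lt_or_ge u1 u2 with hlt | hge
        · exact key u1 u2 hlt he hx
        · exact key u2 u1 (by omega) (by rwa [Sym2.eq_swap]) hx.symm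
    · rw [mem_oE] at hp
      exact ⟨s(p.1, mv E₀ p.1 p.2), mem_subdivide.mpr ⟨p.1, p.2, hp.1, hp.2, Or.inl rfl⟩,
        by simp [sym2Finset]⟩

lemma disjoint_verts_mv :
    Disjoint (verts E₀) ((oE E₀).image (fun p => mv E₀ p.1 p.2)) := by
  rw [Finset.disjoint_left]
  rintro v hv hmem
  rw [Finset.mem_image] at hmem
  obtain ⟨p, -, hp⟩ := hmem
  exact mv_ne_vert hv hp.symm

lemma mv_inj_on : Set.InjOn (fun p : ℕ × ℕ => mv E₀ p.1 p.2) (oE E₀) := by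
  rintro p - q - h
  obtain ⟨h1, h2⟩ := mv_inj h
  exact Prod.ext h1 h2

end Struct2


section Dist
open SimpleGraph

variable {E₀ : Finset (Sym2 ℕ)}

lemma g0_acyclic (hT : IsTreeEdges E₀) : (G0 E₀).IsAcyclic := hT.2.2.1

lemma g0_reach (hT : IsTreeEdges E₀) {u v : ℕ} (hu : u ∈ verts E₀) (hv : v ∈ verts E₀) :
    (G0 E₀).Reachable u v := hT.2.2.2 u hu v hv

lemma double_walk (hT : IsTreeEdges E₀) {x y : ℕ} (p : (G0 E₀).Walk x y) :
    ∃ q : (G1 E₀).Walk x y, q.length = 2 * p.length := by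
  induction p with
  | nil => exact ⟨SimpleGraph.Walk.nil, rfl⟩
  | cons h p ih =>
    rename_i x' z' y'
    obtain ⟨q, hq⟩ := ih
    obtain ⟨hmem, hne⟩ := adj0_iff.mp h
    rcases Nat.lt_or_ge x' z' with hlt | hge
    · refine ⟨SimpleGraph.Walk.cons (adj1_left hlt hmem) (SimpleGraph.Walk.cons (adj1_right hlt hmem) q), ?_⟩
      simp only [SimpleGraph.Walk.length_cons, hq]
      omega
    · have hlt : z' < x' := by omega
      have hmem' : s(z', x') ∈ E₀ := by rwa [Sym2.eq_swap]
      refine ⟨SimpleGraph.Walk.cons (adj1_right hlt hmem').symm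
        (SimpleGraph.Walk.cons (adj1_left hlt hmem').symm q), ?_⟩
      simp only [SimpleGraph.Walk.length_cons, hq]
      omega

lemma lower_VV (hT : IsTreeEdges E₀) : ∀ (n : ℕ) {x y : ℕ} (p : (G1 E₀).Walk x y),
    p.length ≤ n → x ∈ verts E₀ → y ∈ verts E₀ →
    2 * (G0 E₀).dist x y ≤ p.length := by
  intro n
  induction n with
  | zero =>
    intro x y p hlen hx hy
    have h0 : p.length = 0 := by omega
    have := SimpleGraph.Walk.eq_of_length_eq_zero h0
    subst this
    simp [SimpleGraph.dist_self, h0]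
  | succ n ih =>
    intro x y p hlen hx hy
    cases p with
    | nil => simp [SimpleGraph.dist_self]
    | cons h q =>
      rename_i z
      obtain ⟨a, b, hab, hmem, hz, hxor⟩ := N1 hx h
      subst hz
      cases q with
      | nil => exact absurd rfl (mv_ne_vert hy)
      | cons h2 r =>
        rename_i z2
        have hz2 : z2 = a ∨ z2 = b := N2 hab hmem h2
        have hz2V : z2 ∈ verts E₀ := by
          rcases hz2 with rfl | rfl
          · exact (endpoint_mem hmem).1
          · exact (endpoint_mem hmem).2
        simp only [SimpleGraph.Walk.length_cons] at hlen ⊢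
        have hrlen : r.length ≤ n := by omega
        have hIH := ih r hrlen hz2V hy
        have htri : (G0 E₀).dist x y ≤ (G0 E₀).dist x z2 + (G0 E₀).dist z2 y :=
          dist_triangle' (g0_reach hT hx hz2V) (g0_reach hT hz2V hy)
        have hxz2 : (G0 E₀).dist x z2 ≤ 1 := by
          have hadj : (G0 E₀).Adj a b := adj0_of_mem hT.2.1 hmem
          rcases hxor with rfl | rfl <;> rcases hz2 with rfl | rfl
          · simp [SimpleGraph.dist_self]
          · rw [dist_adj_eq_one hadj]
          · rw [dist_adj_eq_one hadj.symm]
          · simp [SimpleGraph.dist_self]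
        omega

lemma lower_VM (hT : IsTreeEdges E₀) {x a b : ℕ} (hx : x ∈ verts E₀)
    (hab : a < b) (hmem : s(a, b) ∈ E₀) (p : (G1 E₀).Walk x (mv E₀ a b)) :
    2 * min ((G0 E₀).dist x a) ((G0 E₀).dist x b) + 1 ≤ p.length := by
  obtain ⟨w, h, q, hq⟩ := SimpleGraph.Walk.exists_eq_cons_of_ne (mv_ne_vert hx).symm p.reverse
  have hw : w = a ∨ w = b := N2 hab hmem h
  have hwV : w ∈ verts E₀ := by
    rcases hw with rfl | rfl
    · exact (endpoint_mem hmem).1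
    · exact (endpoint_mem hmem).2
  have hlow := lower_VV hT q.length q le_rfl hwV hx
  have hlen : p.length = q.length + 1 := by
    have := congrArg SimpleGraph.Walk.length hq
    rw [SimpleGraph.Walk.length_reverse, SimpleGraph.Walk.length_cons] at this
    omega
  have hmin : min ((G0 E₀).dist x a) ((G0 E₀).dist x b) ≤ (G0 E₀).dist w x := by
    rcases hw with rfl | rfl
    · exact le_trans (Nat.min_le_left _ _) (le_of_eq (SimpleGraph.dist_comm ..))
    · exact le_trans (Nat.min_le_right _ _) (le_of_eq (SimpleGraph.dist_comm ..))
  omega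

lemma dist_exact {W : Type*} {H : SimpleGraph W} {u v : W} {k : ℕ} (w : H.Walk u v)
    (hw : w.length = k) (hlow : ∀ p : H.Walk u v, k ≤ p.length) : H.dist u v = k := by
  refine le_antisymm (hw ▸ H.dist_le w) ?_
  obtain ⟨p, hp⟩ := (Reachable.exists_walk_length_eq_dist ⟨w⟩ : ∃ p : H.Walk u v, p.length = H.dist u v)
  rw [← hp]
  exact hlow p

lemma dist1_VV (hT : IsTreeEdges E₀) {x y : ℕ} (hx : x ∈ verts E₀) (hy : y ∈ verts E₀) :
    (G1 E₀).dist x y = 2 * (G0 E₀).dist x y := by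
  obtain ⟨p, -, hp⟩ := exists_geodesic (g0_reach hT hx hy)
  obtain ⟨q, hq⟩ := double_walk hT p
  exact dist_exact q (by rw [hq, hp]) (fun r => lower_VV hT r.length r le_rfl hx hy)

lemma dist1_VM (hT : IsTreeEdges E₀) {x a b : ℕ} (hx : x ∈ verts E₀)
    (hab : a < b) (hmem : s(a, b) ∈ E₀) :
    (G1 E₀).dist x (mv E₀ a b) = 2 * min ((G0 E₀).dist x a) ((G0 E₀).dist x b) + 1 := by
  have haV : a ∈ verts E₀ := (endpoint_mem hmem).1
  have hbV : b ∈ verts E₀ := (endpoint_mem hmem).2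
  rcases le_or_gt ((G0 E₀).dist x a) ((G0 E₀).dist x b) with hle | hlt
  · obtain ⟨p, -, hp⟩ := exists_geodesic (g0_reach hT hx haV)
    obtain ⟨q, hq⟩ := double_walk hT p
    refine dist_exact (q.concat (adj1_left hab hmem)) ?_ (fun r => lower_VM hT hx hab hmem r)
    rw [SimpleGraph.Walk.length_concat, hq, hp, Nat.min_eq_left hle]
  · obtain ⟨p, -, hp⟩ := exists_geodesic (g0_reach hT hx hbV)
    obtain ⟨q, hq⟩ := double_walk hT p
    refine dist_exact (q.concat (adj1_right hab hmem).symm) ?_ (fun r => lower_VM hT hx hab hmem r)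
    rw [SimpleGraph.Walk.length_concat, hq, hp, Nat.min_eq_right (by omega)]

lemma lower_MM (hT : IsTreeEdges E₀) {a b c d : ℕ} (hab : a < b) (hmemab : s(a, b) ∈ E₀)
    (hcd : c < d) (hmemcd : s(c, d) ∈ E₀) (hne : (a, b) ≠ (c, d))
    (p : (G1 E₀).Walk (mv E₀ a b) (mv E₀ c d)) :
    2 * min (min ((G0 E₀).dist c a) ((G0 E₀).dist c b))
            (min ((G0 E₀).dist d a) ((G0 E₀).dist d b)) + 2 ≤ p.length := by
  have hmv : mv E₀ a b ≠ mv E₀ c d := by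
    intro h
    obtain ⟨h1, h2⟩ := mv_inj h
    exact hne (by rw [h1, h2])
  obtain ⟨w, h, q, hq⟩ := SimpleGraph.Walk.exists_eq_cons_of_ne hmv p
  have hw : w = a ∨ w = b := N2 hab hmemab h
  have hwV : w ∈ verts E₀ := by
    rcases hw with rfl | rfl
    · exact (endpoint_mem hmemab).1
    · exact (endpoint_mem hmemab).2
  have hlow := lower_VM hT hwV hcd hmemcd q
  have hlen : p.length = q.length + 1 := by
    have := congrArg SimpleGraph.Walk.length hq
    rw [SimpleGraph.Walk.length_cons] at this
    omega
  have hcw : (G0 E₀).dist w c = (G0 E₀).dist c w := SimpleGraph.dist_comm ..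
  have hdw : (G0 E₀).dist w d = (G0 E₀).dist d w := SimpleGraph.dist_comm ..
  rcases hw with rfl | rfl <;> omega

lemma dist1_MM (hT : IsTreeEdges E₀) {a b c d : ℕ} (hab : a < b) (hmemab : s(a, b) ∈ E₀)
    (hcd : c < d) (hmemcd : s(c, d) ∈ E₀) (hne : (a, b) ≠ (c, d)) :
    (G1 E₀).dist (mv E₀ a b) (mv E₀ c d) =
      2 * min (min ((G0 E₀).dist c a) ((G0 E₀).dist c b))
              (min ((G0 E₀).dist d a) ((G0 E₀).dist d b)) + 2 := by
  have haV : a ∈ verts E₀ := (endpoint_mem hmemab).1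
  have hbV : b ∈ verts E₀ := (endpoint_mem hmemab).2
  have hcV : c ∈ verts E₀ := (endpoint_mem hmemcd).1
  have hdV : d ∈ verts E₀ := (endpoint_mem hmemcd).2
  -- choose attaining endpoints
  have key : ∀ z w : ℕ, (z = a ∨ z = b) → (w = c ∨ w = d) →
      (G0 E₀).dist z w = min (min ((G0 E₀).dist c a) ((G0 E₀).dist c b))
              (min ((G0 E₀).dist d a) ((G0 E₀).dist d b)) →
      (G1 E₀).dist (mv E₀ a b) (mv E₀ c d) =
      2 * min (min ((G0 E₀).dist c a) ((G0 E₀).dist c b))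
              (min ((G0 E₀).dist d a) ((G0 E₀).dist d b)) + 2 := by
    intro z w hz hw hmin
    have hzV : z ∈ verts E₀ := by rcases hz with rfl | rfl <;> assumption
    have hwV : w ∈ verts E₀ := by rcases hw with rfl | rfl <;> assumption
    obtain ⟨p, -, hp⟩ := exists_geodesic (g0_reach hT hzV hwV)
    obtain ⟨q, hq⟩ := double_walk hT p
    have h1 : (G1 E₀).Adj (mv E₀ a b) z := by
      rcases hz with rfl | rfl
      · exact (adj1_left hab hmemab).symm
      · exact adj1_right hab hmemab
    have h2 : (G1 E₀).Adj w (mv E₀ c d) := by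
      rcases hw with rfl | rfl
      · exact adj1_left hcd hmemcd
      · exact (adj1_right hcd hmemcd).symm
    refine dist_exact (SimpleGraph.Walk.cons h1 (q.concat h2)) ?_
      (fun r => lower_MM hT hab hmemab hcd hmemcd hne r)
    rw [SimpleGraph.Walk.length_cons, SimpleGraph.Walk.length_concat, hq, hp]
    omega
  have hca := SimpleGraph.dist_comm (G := G0 E₀) (u := c) (v := a)
  have hcb := SimpleGraph.dist_comm (G := G0 E₀) (u := c) (v := b)
  have hda := SimpleGraph.dist_comm (G := G0 E₀) (u := d) (v := a)
  have hdb := SimpleGraph.dist_comm (G := G0 E₀) (u := d) (v := b)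
  rcases Nat.le_total ((G0 E₀).dist c a) ((G0 E₀).dist c b) with h1 | h1 <;>
  rcases Nat.le_total ((G0 E₀).dist d a) ((G0 E₀).dist d b) with h2 | h2 <;>
  rcases Nat.le_total (min ((G0 E₀).dist c a) ((G0 E₀).dist c b))
    (min ((G0 E₀).dist d a) ((G0 E₀).dist d b)) with h3 | h3
  · exact key a c (Or.inl rfl) (Or.inl rfl) (by omega)
  · exact key a d (Or.inl rfl) (Or.inr rfl) (by omega)
  · exact key a c (Or.inl rfl) (Or.inl rfl) (by omega)
  · exact key b d (Or.inr rfl) (Or.inr rfl) (by omega)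
  · exact key b c (Or.inr rfl) (Or.inl rfl) (by omega)
  · exact key a d (Or.inl rfl) (Or.inr rfl) (by omega)
  · exact key b c (Or.inr rfl) (Or.inl rfl) (by omega)
  · exact key b d (Or.inr rfl) (Or.inr rfl) (by omega)
end Dist


section Bij
open SimpleGraph

variable {E₀ : Finset (Sym2 ℕ)}

lemma pm1 (hT : IsTreeEdges E₀) {u a b : ℕ} (hu : u ∈ verts E₀) (hmem : s(a, b) ∈ E₀) :
    (G0 E₀).dist u b = (G0 E₀).dist u a + 1 ∨ (G0 E₀).dist u a = (G0 E₀).dist u b + 1 :=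
  dist_adj_cases (g0_acyclic hT) (g0_reach hT hu (endpoint_mem hmem).1)
    (adj0_of_mem hT.2.1 hmem)

variable (E₀)

/-- endpoint of the oriented edge `p` farther from `u` -/
noncomputable def farV (u : ℕ) (p : ℕ × ℕ) : ℕ :=
  if (G0 E₀).dist u p.1 < (G0 E₀).dist u p.2 then p.2 else p.1

/-- endpoint of the oriented edge `q` farther from the edge `(a,b)` -/
noncomputable def farE (a b : ℕ) (q : ℕ × ℕ) : ℕ :=
  if (G0 E₀).dist a q.1 + (G0 E₀).dist b q.1 < (G0 E₀).dist a q.2 + (G0 E₀).dist b q.2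
  then q.2 else q.1

variable {E₀}

lemma farV_spec (hT : IsTreeEdges E₀) {u : ℕ} (hu : u ∈ verts E₀) {p : ℕ × ℕ}
    (hp : p ∈ oE E₀) :
    farV E₀ u p ∈ (verts E₀).erase u ∧
    1 ≤ (G0 E₀).dist u (farV E₀ u p) ∧
    2 * min ((G0 E₀).dist u p.1) ((G0 E₀).dist u p.2) + 1 =
      2 * (G0 E₀).dist u (farV E₀ u p) - 1 := by
  obtain ⟨hlt, hmem⟩ := mem_oE.mp hp
  have hpm := pm1 hT hu hmem
  have h1V : p.1 ∈ verts E₀ := (endpoint_mem hmem).1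
  have h2V : p.2 ∈ verts E₀ := (endpoint_mem hmem).2
  have hfar : (farV E₀ u p = p.2 ∧ (G0 E₀).dist u p.2 = (G0 E₀).dist u p.1 + 1) ∨
      (farV E₀ u p = p.1 ∧ (G0 E₀).dist u p.1 = (G0 E₀).dist u p.2 + 1) := by
    rw [farV]
    rcases hpm with hpm | hpm
    · rw [if_pos (by omega)]
      exact Or.inl ⟨rfl, hpm⟩
    · rw [if_neg (by omega)]
      exact Or.inr ⟨rfl, hpm⟩
  have hfV : farV E₀ u p ∈ verts E₀ := by
    rcases hfar with ⟨he, -⟩ | ⟨he, -⟩ <;> rw [he] <;> assumption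
  have hge : 1 ≤ (G0 E₀).dist u (farV E₀ u p) := by
    rcases hfar with ⟨he, hd⟩ | ⟨he, hd⟩ <;> rw [he] <;> omega
  refine ⟨Finset.mem_erase.mpr ⟨?_, hfV⟩, hge, ?_⟩
  · intro hEq
    rw [hEq] at hge
    rw [SimpleGraph.dist_self] at hge
    omega
  · rcases hfar with ⟨he, hd⟩ | ⟨he, hd⟩ <;> rw [he] <;> omega

lemma sorted_pair_eq {p q : ℕ × ℕ} (hp : p.1 < p.2) (hq : q.1 < q.2)
    (h : s(p.1, p.2) = s(q.1, q.2)) : p = q := by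
  rw [Sym2.eq_iff] at h
  rcases h with ⟨h1, h2⟩ | ⟨h1, h2⟩
  · exact Prod.ext h1 h2
  · omega

lemma adj_of_oE (hT : IsTreeEdges E₀) {p : ℕ × ℕ} (hp : p ∈ oE E₀) :
    (G0 E₀).Adj p.1 p.2 := adj0_of_mem hT.2.1 (mem_oE.mp hp).2

lemma farV_inj (hT : IsTreeEdges E₀) {u : ℕ} (hu : u ∈ verts E₀) :
    ∀ p ∈ oE E₀, ∀ q ∈ oE E₀, farV E₀ u p = farV E₀ u q → p = q := by
  intro p hp q hq hEq
  obtain ⟨hltp, hmemp⟩ := mem_oE.mp hp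
  obtain ⟨hltq, hmemq⟩ := mem_oE.mp hq
  -- near endpoints
  have hfp := farV_spec hT hu hp
  have hfq := farV_spec hT hu hq
  have hpmp := pm1 hT hu hmemp
  have hpmq := pm1 hT hu hmemq
  -- characterize: the near endpoint x_p satisfies Adj x (far) and d u x + 1 = d u far
  have key : ∀ r : ℕ × ℕ, r ∈ oE E₀ → ∃ x, (G0 E₀).Adj x (farV E₀ u r) ∧
      (G0 E₀).dist u x + 1 = (G0 E₀).dist u (farV E₀ u r) ∧ x ∈ verts E₀ ∧
      ((farV E₀ u r = r.1 ∧ x = r.2) ∨ (farV E₀ u r = r.2 ∧ x = r.1)) := by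
    intro r hr
    obtain ⟨hltr, hmemr⟩ := mem_oE.mp hr
    have hpmr := pm1 hT hu hmemr
    have hadjr := adj_of_oE hT hr
    rw [farV]
    rcases hpmr with hd | hd
    · rw [if_pos (by omega)]
      exact ⟨r.1, hadjr, by omega, (endpoint_mem hmemr).1, Or.inr ⟨rfl, rfl⟩⟩
    · rw [if_neg (by omega)]
      exact ⟨r.2, hadjr.symm, by omega, (endpoint_mem hmemr).2, Or.inl ⟨rfl, rfl⟩⟩
  obtain ⟨x, hxadj, hxd, hxV, hxor⟩ := key p hp
  obtain ⟨y, hyadj, hyd, hyV, hyor⟩ := key q hq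
  rw [hEq] at hxadj hxd
  have hxy : x = y := unique_parent (g0_acyclic hT) hxadj hyadj hxd hyd
    (g0_reach hT hu hxV) (g0_reach hT hu hyV)
  subst hxy
  apply sorted_pair_eq hltp hltq
  rcases hxor with ⟨he1, he2⟩ | ⟨he1, he2⟩ <;> rcases hyor with ⟨hf1, hf2⟩ | ⟨hf1, hf2⟩ <;>
    rw [Sym2.eq_iff] <;> omega

lemma farV_surj (hT : IsTreeEdges E₀) {u : ℕ} (hu : u ∈ verts E₀) :
    ∀ v ∈ (verts E₀).erase u, ∃ p, ∃ (hp : p ∈ oE E₀), farV E₀ u p = v := by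
  intro v hv
  obtain ⟨hvne, hvV⟩ := Finset.mem_erase.mp hv
  obtain ⟨x, hadj, hd⟩ := exists_parent (g0_reach hT hu hvV) hvne
  obtain ⟨hmem, hne⟩ := adj0_iff.mp hadj
  rcases Nat.lt_or_ge x v with hlt | hge
  · refine ⟨(x, v), mem_oE.mpr ⟨hlt, hmem⟩, ?_⟩
    rw [farV]
    simp only
    rw [if_pos (by omega)]
  · have hlt : v < x := by omega
    refine ⟨(v, x), mem_oE.mpr ⟨hlt, by rwa [Sym2.eq_swap]⟩, ?_⟩
    rw [farV]
    simp only
    rw [if_neg (by omega)]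

lemma card_oE (hT : IsTreeEdges E₀) : (oE E₀).card = (verts E₀).card - 1 := by
  obtain ⟨e, he⟩ := hT.1
  have hu : ∃ u, u ∈ verts E₀ := by
    induction e with
    | _ a b => exact ⟨a, (endpoint_mem he).1⟩
  obtain ⟨u, hu⟩ := hu
  have hcard : (oE E₀).card = ((verts E₀).erase u).card := by
    apply Finset.card_bij (fun p _ => farV E₀ u p)
    · exact fun p hp => (farV_spec hT hu hp).1
    · exact farV_inj hT hu
    · exact farV_surj hT hu
  rw [hcard, Finset.card_erase_of_mem hu]

lemma E1sum (hT : IsTreeEdges E₀) {u : ℕ} (hu : u ∈ verts E₀) :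
    ∑ p ∈ oE E₀, ((2 * min ((G0 E₀).dist u p.1) ((G0 E₀).dist u p.2) + 1 : ℕ) : ℝ)
    = 2 * (∑ v ∈ verts E₀, ((G0 E₀).dist u v : ℝ)) - (((verts E₀).card : ℝ) - 1) := by
  have hbij : ∑ p ∈ oE E₀, ((2 * min ((G0 E₀).dist u p.1) ((G0 E₀).dist u p.2) + 1 : ℕ) : ℝ)
      = ∑ v ∈ (verts E₀).erase u, (2 * ((G0 E₀).dist u v : ℝ) - 1) := by
    apply Finset.sum_bij (fun p _ => farV E₀ u p)
    · exact fun p hp => (farV_spec hT hu hp).1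
    · exact farV_inj hT hu
    · exact farV_surj hT hu
    · intro p hp
      obtain ⟨-, hge, hrel⟩ := farV_spec hT hu hp
      have : ((2 * min ((G0 E₀).dist u p.1) ((G0 E₀).dist u p.2) + 1 : ℕ) : ℝ)
          = ((2 * (G0 E₀).dist u (farV E₀ u p) - 1 : ℕ) : ℝ) := by
        exact congrArg (fun n : ℕ => (n : ℝ)) hrel
      rw [this]
      have h2 : (2 * (G0 E₀).dist u (farV E₀ u p) - 1 : ℕ) + 1 =
          2 * (G0 E₀).dist u (farV E₀ u p) := by omega
      push_cast [h2]
      have := congrArg (fun n : ℕ => (n : ℝ)) h2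
      push_cast at this
      linarith
  rw [hbij, Finset.sum_sub_distrib, ← Finset.mul_sum, Finset.sum_const,
    Finset.card_erase_of_mem hu, Finset.sum_erase _ (by rw [SimpleGraph.dist_self]; norm_num)]
  simp only [nsmul_eq_mul, mul_one]
  rw [Nat.cast_sub (Finset.one_le_card.mpr ⟨u, hu⟩)]
  push_cast
  ring

end Bij


section Bij2
open SimpleGraph

variable {E₀ : Finset (Sym2 ℕ)}

lemma oE_erase_facts {a b : ℕ} (hab : a < b) {q : ℕ × ℕ}
    (hq : q ∈ (oE E₀).erase (a, b)) :
    q.1 < q.2 ∧ s(q.1, q.2) ∈ E₀ ∧ s(q.1, q.2) ≠ s(a, b) := by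
  obtain ⟨hne, hq⟩ := Finset.mem_erase.mp hq
  obtain ⟨hlt, hmem⟩ := mem_oE.mp hq
  refine ⟨hlt, hmem, ?_⟩
  intro hEq
  rw [Sym2.eq_iff] at hEq
  rcases hEq with ⟨h1, h2⟩ | ⟨h1, h2⟩
  · exact hne (Prod.ext h1 h2)
  · omega

lemma farE_spec (hT : IsTreeEdges E₀) {a b : ℕ} (hab : a < b) (hmem : s(a, b) ∈ E₀)
    {q : ℕ × ℕ} (hq : q ∈ (oE E₀).erase (a, b)) :
    farE E₀ a b q ∈ ((verts E₀).erase b).erase a ∧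
    (∃ x, (G0 E₀).Adj x (farE E₀ a b q) ∧
      (G0 E₀).dist a x + 1 = (G0 E₀).dist a (farE E₀ a b q) ∧ x ∈ verts E₀ ∧
      ((farE E₀ a b q = q.1 ∧ x = q.2) ∨ (farE E₀ a b q = q.2 ∧ x = q.1))) ∧
    2 * min (min ((G0 E₀).dist q.1 a) ((G0 E₀).dist q.1 b))
            (min ((G0 E₀).dist q.2 a) ((G0 E₀).dist q.2 b)) + 2 =
      2 * min ((G0 E₀).dist (farE E₀ a b q) a) ((G0 E₀).dist (farE E₀ a b q) b) := by
  obtain ⟨hlt, hqmem, hqne⟩ := oE_erase_facts hab hq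
  have haV : a ∈ verts E₀ := (endpoint_mem hmem).1
  have hbV : b ∈ verts E₀ := (endpoint_mem hmem).2
  have h1V : q.1 ∈ verts E₀ := (endpoint_mem hqmem).1
  have h2V : q.2 ∈ verts E₀ := (endpoint_mem hqmem).2
  have hadjq : (G0 E₀).Adj q.1 q.2 := adj0_of_mem hT.2.1 hqmem
  have hadjab : (G0 E₀).Adj a b := adj0_of_mem hT.2.1 hmem
  have htie : (G0 E₀).dist a q.1 + (G0 E₀).dist b q.1 ≠
      (G0 E₀).dist a q.2 + (G0 E₀).dist b q.2 :=
    tie (g0_acyclic hT) hadjab hadjq hqne (g0_reach hT haV h1V)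
  have hpmA := pm1 hT haV hqmem
  have hpmB := pm1 hT hbV hqmem
  have hc1a : (G0 E₀).dist q.1 a = (G0 E₀).dist a q.1 := SimpleGraph.dist_comm ..
  have hc1b : (G0 E₀).dist q.1 b = (G0 E₀).dist b q.1 := SimpleGraph.dist_comm ..
  have hc2a : (G0 E₀).dist q.2 a = (G0 E₀).dist a q.2 := SimpleGraph.dist_comm ..
  have hc2b : (G0 E₀).dist q.2 b = (G0 E₀).dist b q.2 := SimpleGraph.dist_comm ..
  have hfar : (farE E₀ a b q = q.2 ∧ (G0 E₀).dist a q.2 = (G0 E₀).dist a q.1 + 1 ∧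
        (G0 E₀).dist b q.2 = (G0 E₀).dist b q.1 + 1) ∨
      (farE E₀ a b q = q.1 ∧ (G0 E₀).dist a q.1 = (G0 E₀).dist a q.2 + 1 ∧
        (G0 E₀).dist b q.1 = (G0 E₀).dist b q.2 + 1) := by
    rw [farE]
    rcases Nat.lt_or_ge ((G0 E₀).dist a q.1 + (G0 E₀).dist b q.1)
      ((G0 E₀).dist a q.2 + (G0 E₀).dist b q.2) with hcond | hcond
    · rw [if_pos hcond]
      exact Or.inl ⟨rfl, by omega, by omega⟩
    · rw [if_neg (by omega)]
      exact Or.inr ⟨rfl, by omega, by omega⟩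
  have hfV : farE E₀ a b q ∈ verts E₀ := by
    rcases hfar with ⟨he, -, -⟩ | ⟨he, -, -⟩ <;> rw [he] <;> assumption
  have hga : 1 ≤ (G0 E₀).dist a (farE E₀ a b q) := by
    rcases hfar with ⟨he, h1, h2⟩ | ⟨he, h1, h2⟩ <;> rw [he] <;> omega
  have hgb : 1 ≤ (G0 E₀).dist b (farE E₀ a b q) := by
    rcases hfar with ⟨he, h1, h2⟩ | ⟨he, h1, h2⟩ <;> rw [he] <;> omega
  refine ⟨?_, ?_, ?_⟩
  · refine Finset.mem_erase.mpr ⟨?_, Finset.mem_erase.mpr ⟨?_, hfV⟩⟩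
    · intro hEq
      rw [hEq] at hga
      rw [SimpleGraph.dist_self] at hga
      omega
    · intro hEq
      rw [hEq] at hgb
      rw [SimpleGraph.dist_self] at hgb
      omega
  · rcases hfar with ⟨he, h1, h2⟩ | ⟨he, h1, h2⟩
    · exact ⟨q.1, by rw [he]; exact hadjq, by rw [he]; omega, h1V, Or.inr ⟨he, rfl⟩⟩
    · exact ⟨q.2, by rw [he]; exact hadjq.symm, by rw [he]; omega, h2V, Or.inl ⟨he, rfl⟩⟩
  · rcases hfar with ⟨he, h1, h2⟩ | ⟨he, h1, h2⟩ <;> rw [he] <;> omega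

lemma farE_inj (hT : IsTreeEdges E₀) {a b : ℕ} (hab : a < b) (hmem : s(a, b) ∈ E₀) :
    ∀ p ∈ (oE E₀).erase (a, b), ∀ q ∈ (oE E₀).erase (a, b),
      farE E₀ a b p = farE E₀ a b q → p = q := by
  intro p hp q hq hEq
  have haV : a ∈ verts E₀ := (endpoint_mem hmem).1
  obtain ⟨hltp, -, -⟩ := oE_erase_facts hab hp
  obtain ⟨hltq, -, -⟩ := oE_erase_facts hab hq
  obtain ⟨-, ⟨x, hxadj, hxd, hxV, hxor⟩, -⟩ := farE_spec hT hab hmem hp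
  obtain ⟨-, ⟨y, hyadj, hyd, hyV, hyor⟩, -⟩ := farE_spec hT hab hmem hq
  rw [hEq] at hxadj hxd
  have hxy : x = y := unique_parent (g0_acyclic hT) hxadj hyadj hxd hyd
    (g0_reach hT haV hxV) (g0_reach hT haV hyV)
  subst hxy
  apply sorted_pair_eq hltp hltq
  rw [hEq] at hxor
  rcases hxor with ⟨he1, he2⟩ | ⟨he1, he2⟩ <;> rcases hyor with ⟨hf1, hf2⟩ | ⟨hf1, hf2⟩ <;>
    rw [Sym2.eq_iff] <;> omega

lemma farE_surj (hT : IsTreeEdges E₀) {a b : ℕ} (hab : a < b) (hmem : s(a, b) ∈ E₀) :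
    ∀ w ∈ ((verts E₀).erase b).erase a, ∃ q, ∃ (hq : q ∈ (oE E₀).erase (a, b)),
      farE E₀ a b q = w := by
  intro w hw
  obtain ⟨hwa, hw2⟩ := Finset.mem_erase.mp hw
  obtain ⟨hwb, hwV⟩ := Finset.mem_erase.mp hw2
  have haV : a ∈ verts E₀ := (endpoint_mem hmem).1
  have hbV : b ∈ verts E₀ := (endpoint_mem hmem).2
  obtain ⟨x, hadj, hd⟩ := exists_parent (g0_reach hT haV hwV) hwa
  obtain ⟨hxw_mem, hxw_ne⟩ := adj0_iff.mp hadj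
  have hxV : x ∈ verts E₀ := (endpoint_mem hxw_mem).1
  have hadjab : (G0 E₀).Adj a b := adj0_of_mem hT.2.1 hmem
  have hsymne : s(x, w) ≠ s(a, b) := by
    intro hEq
    rw [Sym2.eq_iff] at hEq
    rcases hEq with ⟨h1, h2⟩ | ⟨h1, h2⟩
    · exact hwb h2
    · exact hwa h2
  have htie : (G0 E₀).dist a x + (G0 E₀).dist b x ≠
      (G0 E₀).dist a w + (G0 E₀).dist b w :=
    tie (g0_acyclic hT) hadjab hadj hsymne (g0_reach hT haV hxV)
  have hpmB := dist_adj_cases (g0_acyclic hT) (g0_reach hT hbV hxV) hadj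
  have hbw : (G0 E₀).dist b w = (G0 E₀).dist b x + 1 := by omega
  rcases Nat.lt_or_ge x w with hlt | hge
  · refine ⟨(x, w), Finset.mem_erase.mpr ⟨?_, mem_oE.mpr ⟨hlt, hxw_mem⟩⟩, ?_⟩
    · intro hEq
      have h1 : x = a := congrArg Prod.fst hEq
      have h2 : w = b := congrArg Prod.snd hEq
      exact hwb h2
    · rw [farE]
      simp only
      rw [if_pos (by omega)]
  · have hlt : w < x := by omega
    refine ⟨(w, x), Finset.mem_erase.mpr ⟨?_, mem_oE.mpr ⟨hlt, by rwa [Sym2.eq_swap]⟩⟩, ?_⟩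
    · intro hEq
      have h2 : x = b := congrArg Prod.snd hEq
      have h1 : w = a := congrArg Prod.fst hEq
      exact hwa h1
    · rw [farE]
      simp only
      rw [if_neg (by omega)]

lemma E2sum (hT : IsTreeEdges E₀) {a b : ℕ} (hab : a < b) (hmem : s(a, b) ∈ E₀) :
    ∑ q ∈ oE E₀, (if (a, b) = q then (0 : ℝ) else
      ((2 * min (min ((G0 E₀).dist q.1 a) ((G0 E₀).dist q.1 b))
               (min ((G0 E₀).dist q.2 a) ((G0 E₀).dist q.2 b)) + 2 : ℕ) : ℝ))
    = (∑ w ∈ verts E₀, ((G0 E₀).dist w a : ℝ)) +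
      (∑ w ∈ verts E₀, ((G0 E₀).dist w b : ℝ)) - ((verts E₀).card : ℝ) := by
  have haV : a ∈ verts E₀ := (endpoint_mem hmem).1
  have hbV : b ∈ verts E₀ := (endpoint_mem hmem).2
  -- step 1: drop the diagonal term
  have h0 : (fun q : ℕ × ℕ => if (a, b) = q then (0 : ℝ) else
      ((2 * min (min ((G0 E₀).dist q.1 a) ((G0 E₀).dist q.1 b))
               (min ((G0 E₀).dist q.2 a) ((G0 E₀).dist q.2 b)) + 2 : ℕ) : ℝ)) (a, b) = 0 := by
    simp
  rw [← Finset.sum_erase (oE E₀) h0]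
  rw [Finset.sum_congr rfl (fun q hq => if_neg (Finset.ne_of_mem_erase hq).symm)]
  -- step 2: bijection to vertices
  have hbij : ∑ q ∈ (oE E₀).erase (a, b),
      ((2 * min (min ((G0 E₀).dist q.1 a) ((G0 E₀).dist q.1 b))
               (min ((G0 E₀).dist q.2 a) ((G0 E₀).dist q.2 b)) + 2 : ℕ) : ℝ)
      = ∑ w ∈ ((verts E₀).erase b).erase a,
          ((2 * min ((G0 E₀).dist w a) ((G0 E₀).dist w b) : ℕ) : ℝ) := by
    apply Finset.sum_bij (fun q _ => farE E₀ a b q)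
    · exact fun q hq => (farE_spec hT hab hmem hq).1
    · exact farE_inj hT hab hmem
    · exact farE_surj hT hab hmem
    · intro q hq
      exact congrArg (fun n : ℕ => (n : ℝ)) (farE_spec hT hab hmem hq).2.2
  rw [hbij]
  -- step 3: add back a and b
  rw [Finset.sum_erase _ (by
    rw [SimpleGraph.dist_self]
    simp)]
  rw [Finset.sum_erase _ (by
    rw [SimpleGraph.dist_self]
    simp)]
  -- step 4: per-term 2 * min = sum - 1
  have hterm : ∀ w ∈ verts E₀, ((2 * min ((G0 E₀).dist w a) ((G0 E₀).dist w b) : ℕ) : ℝ)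
      = ((G0 E₀).dist w a : ℝ) + ((G0 E₀).dist w b : ℝ) - 1 := by
    intro w hwV
    have hpm := pm1 hT hwV hmem
    have h1le : 1 ≤ (G0 E₀).dist w a + (G0 E₀).dist w b := by omega
    have hnat2 : 2 * min ((G0 E₀).dist w a) ((G0 E₀).dist w b) =
        (G0 E₀).dist w a + (G0 E₀).dist w b - 1 := by omega
    rw [hnat2, Nat.cast_sub h1le]
    push_cast
    ring
  rw [Finset.sum_congr rfl hterm, Finset.sum_sub_distrib, Finset.sum_add_distrib,
    Finset.sum_const]
  simp only [nsmul_eq_mul, mul_one]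

end Bij2


section Final
open SimpleGraph

/-- Wiener index of the subdivision tree `T'` of a tree `T` with `h` vertices and
Wiener index `W_T`:  `W(T') = 8 W_T − 2h(h − 1)`. -/
theorem wiener_subdivision_one (E₀ : Finset (Sym2 ℕ)) (hT : IsTreeEdges E₀)
    (h : ℕ) (hh : h = (verts E₀).card)
    (WT : ℝ) (hWT : WT = wienerE E₀) :
    wienerE (subdivide 1 E₀) = 8 * WT - 2 * (h : ℝ) * ((h : ℝ) - 1) := by
  classical
  obtain ⟨e0, he0⟩ := hT.1
  have hVne : ∃ u, u ∈ verts E₀ := by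
    induction e0 with
    | _ x y => exact ⟨x, (endpoint_mem he0).1⟩
  obtain ⟨u0, hu0⟩ := hVne
  have hcard1 : 1 ≤ (verts E₀).card := Finset.one_le_card.mpr ⟨u0, hu0⟩
  set M : Finset ℕ := (oE E₀).image (fun p => mv E₀ p.1 p.2) with hM
  have hverts : verts (subdivide 1 E₀) = verts E₀ ∪ M := verts_subdivide hT.2.1
  have hdisj : Disjoint (verts E₀) M := disjoint_verts_mv
  set D : ℕ → ℝ := fun u => ∑ v ∈ verts E₀, ((G0 E₀).dist u v : ℝ) with hD
  set S : ℝ := ∑ u ∈ verts E₀, D u with hS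
  set n : ℝ := ((verts E₀).card : ℝ) with hn
  have hWTS : WT = S / 2 := hWT
  have hinj : ∀ p ∈ oE E₀, ∀ q ∈ oE E₀, mv E₀ p.1 p.2 = mv E₀ q.1 q.2 → p = q := by
    intro p _ q _ hEq
    obtain ⟨h1, h2⟩ := mv_inj hEq
    exact Prod.ext h1 h2
  have hcard_oE : ((oE E₀).card : ℝ) = n - 1 := by
    rw [card_oE hT, hn, Nat.cast_sub hcard1, Nat.cast_one]
  -- Block VV
  have B11 : ∑ x ∈ verts E₀, ∑ y ∈ verts E₀, (((G1 E₀).dist x y : ℕ) : ℝ) = 2 * S := by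
    rw [hS, Finset.mul_sum]
    apply Finset.sum_congr rfl
    intro x hx
    rw [hD, Finset.mul_sum]
    apply Finset.sum_congr rfl
    intro y hy
    rw [dist1_VV hT hx hy]
    push_cast
    ring
  -- Block VM (inner)
  have B12i : ∀ x ∈ verts E₀, ∑ y ∈ M, (((G1 E₀).dist x y : ℕ) : ℝ) = 2 * D x - (n - 1) := by
    intro x hx
    rw [hM, Finset.sum_image hinj]
    have hcongr : ∀ p ∈ oE E₀, (((G1 E₀).dist x (mv E₀ p.1 p.2) : ℕ) : ℝ)
        = ((2 * min ((G0 E₀).dist x p.1) ((G0 E₀).dist x p.2) + 1 : ℕ) : ℝ) := by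
      intro p hp
      obtain ⟨hlt, hmem⟩ := mem_oE.mp hp
      exact congrArg (fun k : ℕ => (k : ℝ)) (dist1_VM hT hx hlt hmem)
    rw [Finset.sum_congr rfl hcongr, E1sum hT hx]
  have B12 : ∑ x ∈ verts E₀, ∑ y ∈ M, (((G1 E₀).dist x y : ℕ) : ℝ)
      = 2 * S - n * (n - 1) := by
    rw [Finset.sum_congr rfl B12i, Finset.sum_sub_distrib, ← Finset.mul_sum, ← hS,
      Finset.sum_const]
    try simp only [nsmul_eq_mul]
    try rw [← hn]
    try ring
  -- Block MV equals Block VM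
  have B21 : ∑ x ∈ M, ∑ y ∈ verts E₀, (((G1 E₀).dist x y : ℕ) : ℝ)
      = 2 * S - n * (n - 1) := by
    rw [← B12, Finset.sum_comm]
    apply Finset.sum_congr rfl
    intro x _
    apply Finset.sum_congr rfl
    intro y _
    rw [SimpleGraph.dist_comm]
  -- Block MM
  have B22 : ∑ x ∈ M, ∑ y ∈ M, (((G1 E₀).dist x y : ℕ) : ℝ)
      = 2 * S - 2 * (n * (n - 1)) := by
    rw [hM, Finset.sum_image hinj]
    have hinner : ∀ p ∈ oE E₀, ∑ y ∈ (oE E₀).image (fun q => mv E₀ q.1 q.2),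
        (((G1 E₀).dist (mv E₀ p.1 p.2) y : ℕ) : ℝ) = D p.1 + D p.2 - n := by
      intro p hp
      obtain ⟨hltp, hmemp⟩ := mem_oE.mp hp
      rw [Finset.sum_image hinj]
      have hterm : ∀ q ∈ oE E₀, (((G1 E₀).dist (mv E₀ p.1 p.2) (mv E₀ q.1 q.2) : ℕ) : ℝ)
          = (if (p.1, p.2) = q then (0 : ℝ) else
            ((2 * min (min ((G0 E₀).dist q.1 p.1) ((G0 E₀).dist q.1 p.2))
                     (min ((G0 E₀).dist q.2 p.1) ((G0 E₀).dist q.2 p.2)) + 2 : ℕ) : ℝ)) := by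
        intro q hq
        obtain ⟨hltq, hmemq⟩ := mem_oE.mp hq
        by_cases hpq : (p.1, p.2) = q
        · rw [if_pos hpq, ← hpq]
          norm_num [SimpleGraph.dist_self]
        · rw [if_neg hpq]
          have hne : (p.1, p.2) ≠ (q.1, q.2) := by
            intro hEq
            exact hpq (hEq.trans (Prod.mk.eta))
          exact congrArg (fun k : ℕ => (k : ℝ)) (dist1_MM hT hltp hmemp hltq hmemq hne)
      rw [Finset.sum_congr rfl hterm, E2sum hT hltp hmemp]
      have hcomm1 : ∑ w ∈ verts E₀, (((G0 E₀).dist w p.1 : ℕ) : ℝ) = D p.1 := by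
        rw [hD]
        exact Finset.sum_congr rfl (fun w _ => by rw [SimpleGraph.dist_comm])
      have hcomm2 : ∑ w ∈ verts E₀, (((G0 E₀).dist w p.2 : ℕ) : ℝ) = D p.2 := by
        rw [hD]
        exact Finset.sum_congr rfl (fun w _ => by rw [SimpleGraph.dist_comm])
      rw [hcomm1, hcomm2, ← hn]
    rw [Finset.sum_congr rfl hinner, Finset.sum_sub_distrib, Finset.sum_add_distrib,
      Finset.sum_const]
    have hDsum : (∑ p ∈ oE E₀, D p.1) + (∑ p ∈ oE E₀, D p.2) = 2 * S - n * (n - 1) := by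
      rw [← Finset.sum_add_distrib]
      have hsw : ∑ p ∈ oE E₀, (D p.1 + D p.2)
          = ∑ v ∈ verts E₀, ∑ p ∈ oE E₀,
              ((((G0 E₀).dist v p.1 : ℕ) : ℝ) + (((G0 E₀).dist v p.2 : ℕ) : ℝ)) := by
        rw [Finset.sum_comm]
        apply Finset.sum_congr rfl
        intro p _
        rw [hD, Finset.sum_add_distrib]
        congr 1 <;> exact Finset.sum_congr rfl (fun v _ => by rw [SimpleGraph.dist_comm])
      rw [hsw]
      have hv : ∀ v ∈ verts E₀, (∑ p ∈ oE E₀,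
          ((((G0 E₀).dist v p.1 : ℕ) : ℝ) + (((G0 E₀).dist v p.2 : ℕ) : ℝ)))
          = 2 * D v - (n - 1) := by
        intro v hv
        have hterm2 : ∀ p ∈ oE E₀,
            ((((G0 E₀).dist v p.1 : ℕ) : ℝ) + (((G0 E₀).dist v p.2 : ℕ) : ℝ))
            = ((2 * min ((G0 E₀).dist v p.1) ((G0 E₀).dist v p.2) + 1 : ℕ) : ℝ) := by
          intro p hp
          obtain ⟨hlt, hmem⟩ := mem_oE.mp hp
          have hpm := pm1 hT hv hmem
          have hnat : (G0 E₀).dist v p.1 + (G0 E₀).dist v p.2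
              = 2 * min ((G0 E₀).dist v p.1) ((G0 E₀).dist v p.2) + 1 := by omega
          exact_mod_cast congrArg (fun k : ℕ => (k : ℝ)) hnat
        rw [Finset.sum_congr rfl hterm2, E1sum hT hv]
        try simp only [hD, hn]
      rw [Finset.sum_congr rfl hv, Finset.sum_sub_distrib, ← Finset.mul_sum, ← hS,
        Finset.sum_const]
      try simp only [nsmul_eq_mul]
      try rw [← hn]
      try ring
    rw [hDsum]
    simp only [nsmul_eq_mul]
    rw [hcard_oE]
    ring
  -- assemble
  have goal_eq : wienerE (subdivide 1 E₀) = (∑ x ∈ verts (subdivide 1 E₀),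
      ∑ y ∈ verts (subdivide 1 E₀), (((G1 E₀).dist x y : ℕ) : ℝ)) / 2 := rfl
  rw [goal_eq, hverts]
  rw [Finset.sum_union hdisj]
  have hsplit : ∀ s : Finset ℕ, ∑ x ∈ s, ∑ y ∈ verts E₀ ∪ M, (((G1 E₀).dist x y : ℕ) : ℝ)
      = (∑ x ∈ s, ∑ y ∈ verts E₀, (((G1 E₀).dist x y : ℕ) : ℝ))
        + ∑ x ∈ s, ∑ y ∈ M, (((G1 E₀).dist x y : ℕ) : ℝ) := by
    intro s
    rw [← Finset.sum_add_distrib]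
    exact Finset.sum_congr rfl (fun x _ => Finset.sum_union hdisj)
  rw [hsplit, hsplit, B11, B12, B21, B22, hWTS, hh, ← hn]
  ring
end Final
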